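/- Let m ≥ 1 be an integer, let G, H, Δ be complex numbers with Δ² = G² − H·conj(H), and set ω_r = e^{i(2r−1)π/m} for r = 1, …, m. Then ∏_{r=1}^{m} ( 2G + H·ω_r + conj(H)·conj(ω_r) ) = (−H)^m + (−conj(H))^m + (G+Δ)^m + (G−Δ)^m. -/

import Mathlib

open Complex Polynomial

lemma prod_sub_pow_mul (m : ℕ) (hm : m ≠ 0) {ζ : ℂ} (hζ : IsPrimitiveRoot ζ m) (α x : ℂ) :
    ∏ r ∈ Finset.range m, (x - ζ ^ r * α) = x ^ m - α ^ m := by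
  have h1 : (X ^ m - C (α ^ m) : ℂ[X]) =
      (Multiset.map (fun a => X - C a) ((X ^ m - C (α ^ m) : ℂ[X]).roots)).prod :=
    Splits.eq_prod_roots_of_monic (IsAlgClosed.splits _) (monic_X_pow_sub_C _ hm)
  have h2 : (X ^ m - C (α ^ m) : ℂ[X]).roots = (Multiset.range m).map (fun r => ζ ^ r * α) := by
    have := hζ.nthRoots_eq (α := α) rfl
    rwa [Polynomial.nthRoots] at this
  have := congrArg (Polynomial.eval x) h1
  rw [h2] at this
  simpa [Polynomial.eval_multiset_prod, Multiset.map_map, Function.comp,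
    Finset.prod, Finset.range] using this.symm

theorem prod_roots_identity (m : ℕ) (hm : 1 ≤ m) (G H Δ : ℂ)
    (hΔ : Δ ^ 2 = G ^ 2 - H * (starRingEnd ℂ) H) :
    ∏ r ∈ Finset.range m,
        (2 * G + H * Complex.exp (Complex.I * ((2 * (r + 1 : ℕ) - 1 : ℕ) * Real.pi / m))
          + (starRingEnd ℂ) H *
            (starRingEnd ℂ) (Complex.exp (Complex.I * ((2 * (r + 1 : ℕ) - 1 : ℕ) * Real.pi / m)))) =
      (-H) ^ m + (-(starRingEnd ℂ) H) ^ m + (G + Δ) ^ m + (G - Δ) ^ m := by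
  have hm0 : m ≠ 0 := by omega
  have hmc : (m : ℂ) ≠ 0 := Nat.cast_ne_zero.mpr hm0
  set ζ : ℂ := Complex.exp (2 * Real.pi * Complex.I / m) with hζdef
  have hζ : IsPrimitiveRoot ζ m := Complex.isPrimitiveRoot_exp m hm0
  set μ : ℂ := Complex.exp (Complex.I * (Real.pi / m)) with hμdef
  have hω : ∀ r : ℕ, Complex.exp (Complex.I * ((2 * (r + 1 : ℕ) - 1 : ℕ) * Real.pi / m))
      = ζ ^ r * μ := by
    intro r
    have h1 : (2 * (r + 1) - 1 : ℕ) = 2 * r + 1 := by omega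
    rw [hζdef, hμdef, ← Complex.exp_nat_mul, ← Complex.exp_add, h1]
    push_cast
    congr 1
    field_simp
  have hconj : ∀ r : ℕ,
      (starRingEnd ℂ) (Complex.exp (Complex.I * ((2 * (r + 1 : ℕ) - 1 : ℕ) * Real.pi / m)))
        = (Complex.exp (Complex.I * ((2 * (r + 1 : ℕ) - 1 : ℕ) * Real.pi / m)))⁻¹ := by
    intro r
    rw [← Complex.exp_conj, ← Complex.exp_neg]
    congr 1
    simp [map_mul, map_div₀, map_natCast, map_ofNat, Complex.conj_I, Complex.conj_ofReal]
  have hμm : μ ^ m = -1 := by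
    rw [hμdef, ← Complex.exp_nat_mul]
    rw [show (m : ℂ) * (Complex.I * (Real.pi / m)) = Real.pi * Complex.I by
      field_simp]
    exact Complex.exp_pi_mul_I
  have key : ∀ x : ℂ, ∏ r ∈ Finset.range m, (x + H * (ζ ^ r * μ)) = x ^ m + (-H) ^ m := by
    intro x
    have h := prod_sub_pow_mul m hm0 hζ (-(H * μ)) x
    have e : ∀ r ∈ Finset.range m, x + H * (ζ ^ r * μ) = x - ζ ^ r * (-(H * μ)) :=
      fun r _ => by ring
    rw [Finset.prod_congr rfl e, h, neg_pow (H * μ), mul_pow, hμm, neg_pow H]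
    ring
  by_cases hH : H = 0
  · subst hH
    simp only [map_zero, zero_mul, mul_zero, add_zero, neg_zero]
    rw [Finset.prod_const, Finset.card_range]
    have h0 : (Δ - G) * (Δ + G) = 0 := by linear_combination hΔ
    rcases mul_eq_zero.mp h0 with h | h
    · have hDG : Δ = G := sub_eq_zero.mp h
      subst hDG
      simp [zero_pow hm0, sub_self, two_mul]
    · have hDG : Δ = -G := eq_neg_of_add_eq_zero_left h
      subst hDG
      simp [zero_pow hm0, two_mul, sub_neg_eq_add]
  · have hHm : (-H) ^ m ≠ 0 := pow_ne_zero _ (neg_ne_zero.mpr hH)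
    have fac : ∀ r ∈ Finset.range m,
        (2 * G + H * Complex.exp (Complex.I * ((2 * (r + 1 : ℕ) - 1 : ℕ) * Real.pi / m))
          + (starRingEnd ℂ) H *
            (starRingEnd ℂ) (Complex.exp (Complex.I * ((2 * (r + 1 : ℕ) - 1 : ℕ) * Real.pi / m))))
        = ((G + Δ) + H * (ζ ^ r * μ)) * ((G - Δ) + H * (ζ ^ r * μ)) * (0 + H * (ζ ^ r * μ))⁻¹ := by
      intro r _
      rw [hconj r, hω r]
      have hne : ζ ^ r * μ ≠ 0 := by
        rw [hζdef, hμdef, ← Complex.exp_nat_mul, ← Complex.exp_add]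
        exact Complex.exp_ne_zero _
      rw [zero_add]
      have hζ0 : ζ ≠ 0 := hζ.ne_zero hm0
      have hμ0 : μ ≠ 0 := Complex.exp_ne_zero _
      field_simp
      linear_combination hΔ
    rw [Finset.prod_congr rfl fac, Finset.prod_mul_distrib, Finset.prod_mul_distrib,
      Finset.prod_inv_distrib, key, key, key, zero_pow hm0, zero_add]
    have h2 : (G + Δ) ^ m * (G - Δ) ^ m = (-H) ^ m * (-(starRingEnd ℂ) H) ^ m := by
      rw [← mul_pow, ← mul_pow]
      congr 1
      linear_combination -hΔ
    field_simp
    linear_combination h2
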